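/- arXiv:1406.1945 — 2 statements merged into one kernel-verified Lean document; each statement's English description precedes it below -/
import Mathlib

section
/- For the Kauffman bracket of a connected link diagram D with c(D) crossings, max-deg_A⟨D⟩ - min-deg_A⟨D⟩ ≤ 2(c(D) + |s_A(D)| + |s_B(D)| - 2), where ⟨D⟩ = Σ_s A^{a(s)-b(s)} (-A² - A⁻²)^{|s|-1} is the state sum over all 2^{c(D)} states. -/
open LaurentPolynomial

/-- Number of A-smoothings of a state (`false` = A-smoothing). -/
def aCount {c : ℕ} (s : Fin c → Bool) : ℕ := (Finset.univ.filter fun i => s i = false).card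

/-- Number of B-smoothings of a state (`true` = B-smoothing). -/
def bCount {c : ℕ} (s : Fin c → Bool) : ℕ := (Finset.univ.filter fun i => s i = true).card

/-- Support of one state term is within `[k - 2n, k + 2n]`. -/
lemma term_support_bound (k : ℤ) (n : ℕ) :
    ∀ m ∈ ((T k * (-(T 2) - T (-2)) ^ n) : LaurentPolynomial ℤ).coeff.support,
      k - 2 * n ≤ m ∧ m ≤ k + 2 * n := by
  induction n with
  | zero =>
    intro m hm
    simp only [pow_zero, mul_one] at hm
    have : m ∈ (Finsupp.single k (1 : ℤ)).support := by
      rwa [show (T k : LaurentPolynomial ℤ).coeff = Finsupp.single k 1 from rfl] at hm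
    rcases Finset.mem_singleton.1 (Finsupp.support_single_subset this) with rfl
    simp
  | succ n ih =>
    intro m hm
    have heq : (T k * (-(T 2) - T (-2)) ^ (n + 1) : LaurentPolynomial ℤ)
        = (T k * (-(T 2) - T (-2)) ^ n) * (-(T 2) - T (-2)) := by ring
    rw [heq] at hm
    have hsub := AddMonoidAlgebra.support_coeff_mul_subset
      (T k * (-(T 2) - T (-2)) ^ n : LaurentPolynomial ℤ) (-(T 2) - T (-2))
    rcases Finset.mem_add.1 (hsub hm) with ⟨a, ha, b, hb, rfl⟩
    obtain ⟨h1, h2⟩ := ih a ha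
    have hbsub : ((-(T 2) - T (-2)) : LaurentPolynomial ℤ).coeff.support ⊆ {2, -2} := by
      intro x hx
      have h1 : ((-(T 2) - T (-2)) : LaurentPolynomial ℤ).coeff
          = -Finsupp.single (2 : ℤ) (1 : ℤ) + -Finsupp.single (-2 : ℤ) (1 : ℤ) := by
        rw [AddMonoidAlgebra.coeff_sub, AddMonoidAlgebra.coeff_neg, LaurentPolynomial.T,
          LaurentPolynomial.T, AddMonoidAlgebra.coeff_single, AddMonoidAlgebra.coeff_single]; abel
      rw [h1] at hx
      have := Finsupp.support_add hx
      rw [Finsupp.support_neg, Finsupp.support_neg] at this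
      rcases Finset.mem_union.1 this with h | h
      · exact Finset.mem_insert.2 (Or.inl (Finset.mem_singleton.1 (Finsupp.support_single_subset h)))
      · exact Finset.mem_insert.2 (Or.inr (Finsupp.support_single_subset h))
    have hb2 : b = 2 ∨ b = -2 := by
      rcases Finset.mem_insert.1 (hbsub hb) with h | h
      · exact Or.inl h
      · exact Or.inr (Finset.mem_singleton.1 h)
    rcases hb2 with rfl | rfl <;> constructor <;> push_cast <;> omega

/-- Circle count is at most the all-false count plus the number of `true`s. -/
lemma circles_le_base (c : ℕ) (circles : (Fin c → Bool) → ℕ)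
    (hadj : ∀ (s : Fin c → Bool) (i : Fin c),
      circles (Function.update s i (!s i)) = circles s + 1 ∨
      circles s = circles (Function.update s i (!s i)) + 1)
    (base : Bool) :
    ∀ n (s : Fin c → Bool),
      (Finset.univ.filter fun i => s i = !base).card = n →
      circles s ≤ circles (fun _ => base) + n := by
  intro n
  induction n with
  | zero =>
    intro s hs
    have : s = fun _ => base := by
      funext i
      by_contra h
      have : i ∈ Finset.univ.filter fun i => s i = !base := by
        simp only [Finset.mem_filter, Finset.mem_univ, true_and]
        cases base <;> cases hsi : s i <;> simp_all
      rw [Finset.card_eq_zero] at hs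
      simp [hs] at this
    rw [this]; simp
  | succ n ih =>
    intro s hs
    have hne : (Finset.univ.filter fun i => s i = !base).Nonempty := by
      rw [← Finset.card_pos, hs]; omega
    obtain ⟨i, hi⟩ := hne
    simp only [Finset.mem_filter, Finset.mem_univ, true_and] at hi
    set s' := Function.update s i (!s i) with hs'
    have hcard : (Finset.univ.filter fun j => s' j = !base).card = n := by
      have : (Finset.univ.filter fun j => s' j = !base)
          = (Finset.univ.filter fun j => s j = !base).erase i := by
        ext j
        simp only [Finset.mem_filter, Finset.mem_univ, true_and, Finset.mem_erase]
        by_cases hj : j = i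
        · subst hj
          simp [hs', Function.update_self, hi]
        · simp [hs', Function.update_of_ne hj, hj]
      rw [this, Finset.card_erase_of_mem
        (Finset.mem_filter.2 ⟨Finset.mem_univ i, hi⟩), hs]
      omega
    have hle : circles s ≤ circles s' + 1 := by
      rw [hs']
      rcases hadj s i with h | h <;> omega
    have := ih s' hcard
    omega

/-- For a connected link diagram `D` with `c` crossings, model its states as
functions `s : Fin c → Bool` (`false` = A-smoothing, `true` = B-smoothing) with circle count
`|s| = circles s ≥ 1`, where changing a single smoothing changes `|s|` by exactly `±1`.  The
Kauffman bracket is the Laurent polynomial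
`⟨D⟩ = Σ_s A^{a(s)-b(s)} (-A² - A⁻²)^{|s|-1}`, summed over all `2^c` states.  Then
`max-deg_A ⟨D⟩ - min-deg_A ⟨D⟩ ≤ 2(c + |s_A| + |s_B| - 2)`, where `s_A` is the all-A state
and `s_B` the all-B state. -/
theorem kauffman_bracket_span_bound (c : ℕ)
    (circles : (Fin c → Bool) → ℕ)
    (hpos : ∀ s, 1 ≤ circles s)
    (hadj : ∀ (s : Fin c → Bool) (i : Fin c),
      circles (Function.update s i (!s i)) = circles s + 1 ∨
      circles s = circles (Function.update s i (!s i)) + 1)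
    (bracket : LaurentPolynomial ℤ)
    (hbr : bracket = ∑ s : Fin c → Bool,
      T ((aCount s : ℤ) - bCount s) * (-(T 2) - T (-2)) ^ (circles s - 1)) :
    ∀ m ∈ bracket.coeff.support, ∀ m' ∈ bracket.coeff.support,
      m - m' ≤ 2 * ((c : ℤ) + circles (fun _ => false) + circles (fun _ => true) - 2) := by
  have hab : ∀ s : Fin c → Bool, aCount s + bCount s = c := by
    intro s
    have := Finset.card_filter_add_card_filter_not
      (s := (Finset.univ : Finset (Fin c))) (p := fun i => s i = true)
    simp only [Finset.card_univ, Fintype.card_fin] at this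
    have h2 : (Finset.univ.filter fun i => ¬ s i = true)
        = (Finset.univ.filter fun i => s i = false) := by
      ext i; simp
    rw [h2] at this
    unfold aCount bCount
    omega
  -- bound for each state's term support
  have key : ∀ (s : Fin c → Bool),
      ∀ m ∈ ((T ((aCount s : ℤ) - bCount s) * (-(T 2) - T (-2)) ^ (circles s - 1))
        : LaurentPolynomial ℤ).coeff.support,
      -(c : ℤ) - 2 * (circles (fun _ => true) - 1) ≤ m ∧
      m ≤ (c : ℤ) + 2 * (circles (fun _ => false) - 1) := by
    intro s m hm
    obtain ⟨h1, h2⟩ := term_support_bound _ _ m hm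
    have hA : circles s ≤ circles (fun _ => false) + bCount s :=
      circles_le_base c circles hadj false (bCount s) s (by simp [bCount])
    have hB : circles s ≤ circles (fun _ => true) + aCount s :=
      circles_le_base c circles hadj true (aCount s) s (by simp [aCount])
    have hc1 : ((circles s - 1 : ℕ) : ℤ) = (circles s : ℤ) - 1 := by
      have := hpos s; omega
    rw [hc1] at h1 h2
    have habs := hab s
    have hpA := hpos (fun _ => false)
    have hpB := hpos (fun _ => true)
    constructor
    · have : (circles s : ℤ) ≤ circles (fun _ => true) + aCount s := by exact_mod_cast hB
      have hc : (aCount s : ℤ) + bCount s = c := by exact_mod_cast habs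
      nlinarith
    · have : (circles s : ℤ) ≤ circles (fun _ => false) + bCount s := by exact_mod_cast hA
      have hc : (aCount s : ℤ) + bCount s = c := by exact_mod_cast habs
      nlinarith
  intro m hm m' hm'
  rw [hbr, AddMonoidAlgebra.coeff_sum] at hm hm'
  obtain ⟨s, _, hms⟩ := Finsupp.mem_support_finset_sum m hm
  obtain ⟨s', _, hms'⟩ := Finsupp.mem_support_finset_sum m' hm'
  have h1 := (key s m hms).2
  have h2 := (key s' m' hms').1
  have hpA := hpos (fun _ => false)
  have hpB := hpos (fun _ => true)
  linarith
end

section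
/- The genus of a quasi-tree Q of a connected ribbon graph equals half the rank over GF(2) of the adjacency matrix of the intersection graph of the chord sub-diagram C consisting of the chords corresponding to edges of Q. -/
/-- The number of orbits (cycles, including fixed points) of a permutation. -/
noncomputable def permOrbits {α : Type*} [Fintype α] (σ : Equiv.Perm α) : ℕ :=
  Nat.card (MulAction.orbitRel.Quotient (Subgroup.closure ({σ} : Set (Equiv.Perm α))) α)

/-- A chord diagram with `m` chords on a circle with `2m` marked points: chord `i` has
endpoints `(ep i).1 < (ep i).2`, and the endpoints exhaust the marked points.  The pairing
involution swapping the two endpoints of each chord. -/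
noncomputable def chordPairing (m : ℕ) (ep : Fin m → Fin (2 * m) × Fin (2 * m))
    (hall : Function.Bijective
      (fun x : Fin m × Bool => if x.2 then (ep x.1).2 else (ep x.1).1)) :
    Equiv.Perm (Fin (2 * m)) :=
  ((Equiv.ofBijective _ hall).symm.trans
    ((Equiv.prodCongr (Equiv.refl (Fin m))
      (Function.Involutive.toPerm not fun b => Bool.not_not b)).trans
        (Equiv.ofBijective _ hall)))

/-- Chords `i` and `j` interleave (cross), with `i` "starting first". -/
def interleaves {m : ℕ} (ep : Fin m → Fin (2 * m) × Fin (2 * m)) (i j : Fin m) : Prop :=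
  (ep i).1 < (ep j).1 ∧ (ep j).1 < (ep i).2 ∧ (ep i).2 < (ep j).2

instance {m : ℕ} (ep : Fin m → Fin (2 * m) × Fin (2 * m)) (i j : Fin m) :
    Decidable (interleaves ep i j) := by unfold interleaves; infer_instance

/-- The adjacency matrix over GF(2) of the intersection graph of the chord diagram. -/
def interMatrix {m : ℕ} (ep : Fin m → Fin (2 * m) × Fin (2 * m)) :
    Matrix (Fin m) (Fin m) (ZMod 2) :=
  fun i j => if interleaves ep i j ∨ interleaves ep j i then 1 else 0


section Aux

variable {m : ℕ} {ep : Fin m → Fin (2 * m) × Fin (2 * m)}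

/-- First test: chordPairing computations -/
lemma chordPairing_fst (hall : Function.Bijective
      (fun x : Fin m × Bool => if x.2 then (ep x.1).2 else (ep x.1).1)) (i : Fin m) :
    chordPairing m ep hall (ep i).1 = (ep i).2 := by
  have h1 : (Equiv.ofBijective _ hall) (i, false) = (ep i).1 := rfl
  have h2 : (Equiv.ofBijective _ hall) (i, true) = (ep i).2 := rfl
  calc chordPairing m ep hall (ep i).1
      = (Equiv.ofBijective _ hall) ((Equiv.prodCongr (Equiv.refl (Fin m))
          (Function.Involutive.toPerm not fun b => Bool.not_not b))
          ((Equiv.ofBijective _ hall).symm (ep i).1)) := rfl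
    _ = (ep i).2 := by rw [← h1, Equiv.symm_apply_apply]; exact h2

lemma chordPairing_snd (hall : Function.Bijective
      (fun x : Fin m × Bool => if x.2 then (ep x.1).2 else (ep x.1).1)) (i : Fin m) :
    chordPairing m ep hall (ep i).2 = (ep i).1 := by
  have h1 : (Equiv.ofBijective _ hall) (i, false) = (ep i).1 := rfl
  have h2 : (Equiv.ofBijective _ hall) (i, true) = (ep i).2 := rfl
  calc chordPairing m ep hall (ep i).2
      = (Equiv.ofBijective _ hall) ((Equiv.prodCongr (Equiv.refl (Fin m))
          (Function.Involutive.toPerm not fun b => Bool.not_not b))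
          ((Equiv.ofBijective _ hall).symm (ep i).2)) := rfl
    _ = (ep i).1 := by rw [← h2, Equiv.symm_apply_apply]; exact h1

lemma exists_chord (hall : Function.Bijective
      (fun x : Fin m × Bool => if x.2 then (ep x.1).2 else (ep x.1).1)) (k : Fin (2 * m)) :
    ∃ i, (ep i).1 = k ∨ (ep i).2 = k := by
  obtain ⟨⟨i, b⟩, hb⟩ := hall.2 k
  cases b
  · exact ⟨i, Or.inl hb⟩
  · exact ⟨i, Or.inr hb⟩

lemma a_ne_b (hall : Function.Bijective
      (fun x : Fin m × Bool => if x.2 then (ep x.1).2 else (ep x.1).1)) (i j : Fin m) :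
    (ep i).1 ≠ (ep j).2 := by
  intro h
  have := hall.1 (a₁ := (i, false)) (a₂ := (j, true)) h
  simp at this

lemma a_inj (hall : Function.Bijective
      (fun x : Fin m × Bool => if x.2 then (ep x.1).2 else (ep x.1).1)) {i j : Fin m}
    (h : (ep i).1 = (ep j).1) : i = j := by
  have := hall.1 (a₁ := (i, false)) (a₂ := (j, false)) h
  simpa using this

lemma b_inj (hall : Function.Bijective
      (fun x : Fin m × Bool => if x.2 then (ep x.1).2 else (ep x.1).1)) {i j : Fin m}
    (h : (ep i).2 = (ep j).2) : i = j := by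
  have := hall.1 (a₁ := (i, true)) (a₂ := (j, true)) h
  simpa using this

end Aux

/-- Parity of the number of endpoints of chord `i` lying in `[0, p)`. -/
def chi {m : ℕ} (ep : Fin m → Fin (2 * m) × Fin (2 * m)) (i : Fin m) (p : ℕ) : ZMod 2 :=
  (if ((ep i).1 : ℕ) < p then 1 else 0) + (if ((ep i).2 : ℕ) < p then 1 else 0)

section Aux2

variable {m : ℕ} {ep : Fin m → Fin (2 * m) × Fin (2 * m)}

lemma chi_key (hlt : ∀ i, (ep i).1 < (ep i).2)
    (hall : Function.Bijective
      (fun x : Fin m × Bool => if x.2 then (ep x.1).2 else (ep x.1).1)) (i j : Fin m) :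
    chi ep j ((ep i).2 : ℕ) + chi ep j ((ep i).1 : ℕ)
      = interMatrix ep i j + (if i = j then 1 else 0) := by
  rcases eq_or_ne i j with rfl | hne
  · have h := hlt i
    rw [Fin.lt_def] at h
    simp only [chi, interMatrix, interleaves, Fin.lt_def, if_pos rfl]
    split_ifs <;> first | decide | (exfalso; omega)
  · have hii := hlt i; have hjj := hlt j
    rw [Fin.lt_def] at hii hjj
    have d1 : ((ep i).1 : ℕ) ≠ ((ep j).1 : ℕ) := fun h => hne (a_inj hall (Fin.val_injective h))
    have d2 : ((ep i).2 : ℕ) ≠ ((ep j).2 : ℕ) := fun h => hne (b_inj hall (Fin.val_injective h))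
    have d3 : ((ep i).1 : ℕ) ≠ ((ep j).2 : ℕ) := fun h => a_ne_b hall i j (Fin.val_injective h)
    have d4 : ((ep j).1 : ℕ) ≠ ((ep i).2 : ℕ) := fun h => a_ne_b hall j i (Fin.val_injective h)
    simp only [chi, interMatrix, interleaves, Fin.lt_def, if_neg hne]
    split_ifs <;> first | decide | (exfalso; omega)

lemma sum_key (hlt : ∀ i, (ep i).1 < (ep i).2)
    (hall : Function.Bijective
      (fun x : Fin m × Bool => if x.2 then (ep x.1).2 else (ep x.1).1))
    (c : Fin m → ZMod 2) (i : Fin m) :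
    ∑ j, c j * (chi ep j ((ep i).2 : ℕ) + chi ep j ((ep i).1 : ℕ))
      = (interMatrix ep).mulVec c i + c i := by
  simp only [chi_key hlt hall i, Matrix.mulVec, dotProduct, mul_add]
  rw [Finset.sum_add_distrib]
  congr 1
  · exact Finset.sum_congr rfl fun j _ => mul_comm _ _
  · simp [mul_ite, mul_one, mul_zero]

lemma chi_step (hlt : ∀ i, (ep i).1 < (ep i).2) (j : Fin m) (n : ℕ) :
    chi ep j (n + 1) = chi ep j n +
      ((if ((ep j).1 : ℕ) = n then 1 else 0) + (if ((ep j).2 : ℕ) = n then 1 else 0)) := by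
  have h := hlt j
  rw [Fin.lt_def] at h
  simp only [chi]
  split_ifs <;> first | decide | (exfalso; omega)

lemma sum_step (hlt : ∀ i, (ep i).1 < (ep i).2)
    (hall : Function.Bijective
      (fun x : Fin m × Bool => if x.2 then (ep x.1).2 else (ep x.1).1))
    (c : Fin m → ZMod 2) (i0 : Fin m) (n : ℕ)
    (hn : ((ep i0).1 : ℕ) = n ∨ ((ep i0).2 : ℕ) = n) :
    ∑ j, c j * chi ep j (n + 1) = (∑ j, c j * chi ep j n) + c i0 := by
  have key : ∑ j, c j * ((if ((ep j).1 : ℕ) = n then (1 : ZMod 2) else 0)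
      + (if ((ep j).2 : ℕ) = n then 1 else 0)) = c i0 := by
    rw [Finset.sum_eq_single i0]
    · have h := hlt i0; rw [Fin.lt_def] at h
      rcases hn with hn | hn
      · rw [if_pos hn, if_neg (by omega)]; ring
      · rw [if_neg (by omega), if_pos hn]; ring
    · intro j _ hj
      have d1 : ((ep j).1 : ℕ) ≠ ((ep i0).1 : ℕ) := fun h => hj (a_inj hall (Fin.val_injective h))
      have d2 : ((ep j).2 : ℕ) ≠ ((ep i0).2 : ℕ) := fun h => hj (b_inj hall (Fin.val_injective h))
      have d3 : ((ep j).1 : ℕ) ≠ ((ep i0).2 : ℕ) := fun h => a_ne_b hall j i0 (Fin.val_injective h)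
      have d4 : ((ep i0).1 : ℕ) ≠ ((ep j).2 : ℕ) := fun h => a_ne_b hall i0 j (Fin.val_injective h)
      rcases hn with hn | hn
      · rw [if_neg (by omega), if_neg (by omega)]; ring
      · rw [if_neg (by omega), if_neg (by omega)]; ring
    · simp
  have expand : ∀ j : Fin m, c j * chi ep j (n + 1) = c j * chi ep j n
      + c j * ((if ((ep j).1 : ℕ) = n then (1 : ZMod 2) else 0)
        + (if ((ep j).2 : ℕ) = n then 1 else 0)) := fun j => by
    rw [chi_step hlt]; ring
  rw [Finset.sum_congr rfl (fun j _ => expand j), Finset.sum_add_distrib, key]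

end Aux2

lemma finRotate_val {N : ℕ} (k : Fin N) :
    ((finRotate N) k : ℕ) = if (k : ℕ) + 1 = N then 0 else (k : ℕ) + 1 := by
  match N, k with
  | n + 1, k =>
    rw [finRotate_succ_apply, Fin.val_add_one]
    rcases eq_or_ne k (Fin.last n) with rfl | h
    · simp [Fin.val_last]
    · rw [if_neg h, if_neg]
      intro hk
      exact h (Fin.ext (by omega : (k : ℕ) = n))

section Aux3

variable {m : ℕ} {ep : Fin m → Fin (2 * m) × Fin (2 * m)}
  {hall : Function.Bijective
      (fun x : Fin m × Bool => if x.2 then (ep x.1).2 else (ep x.1).1)}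

lemma char2 (u v : ZMod 2) : v = u + (u + v) := by revert u v; decide

/-- STEP: moving one point forward along the circle changes `x` by the chord value. -/
lemma step_lemma {x : Fin (2 * m) → ZMod 2}
    (H : ∀ k, x (chordPairing m ep hall k) = x (finRotate (2 * m) k)) (i : Fin m) :
    x (finRotate (2 * m) (ep i).1) = x (ep i).1 + (x (ep i).1 + x (ep i).2) ∧
    x (finRotate (2 * m) (ep i).2) = x (ep i).2 + (x (ep i).1 + x (ep i).2) := by
  constructor
  · rw [← H, chordPairing_fst hall]
    exact char2 _ _
  · rw [← H, chordPairing_snd hall]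
    calc x (ep i).1 = x (ep i).2 + (x (ep i).1 + x (ep i).2) := by
          rw [add_comm (x (ep i).1)]; exact char2 _ _

/-- Representation: any `H`-invariant function is determined by its value at 0 and the chord
values via the counting function `chi`. -/
lemma repr_lemma (hm : 0 < m) (hlt : ∀ i, (ep i).1 < (ep i).2)
    {x : Fin (2 * m) → ZMod 2}
    (H : ∀ k, x (chordPairing m ep hall k) = x (finRotate (2 * m) k)) :
    ∀ j : Fin (2 * m), x j = x ⟨0, by omega⟩
      + ∑ i, (x (ep i).1 + x (ep i).2) * chi ep i (j : ℕ) := by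
  suffices h : ∀ n, ∀ j : Fin (2 * m), (j : ℕ) = n → x j = x ⟨0, by omega⟩
      + ∑ i, (x (ep i).1 + x (ep i).2) * chi ep i (j : ℕ) by
    intro j; exact h (j : ℕ) j rfl
  intro n
  induction n with
  | zero =>
    intro j hj
    have hje : j = ⟨0, by omega⟩ := Fin.ext hj
    rw [hje]
    simp [chi]
  | succ n ih =>
    intro j hj
    have hn2 : n + 1 < 2 * m := hj ▸ j.isLt
    set k : Fin (2 * m) := ⟨n, by omega⟩ with hk
    have hrotk : finRotate (2 * m) k = j := by
      apply Fin.ext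
      rw [finRotate_val]
      simp only [hk]
      rw [if_neg (by omega)]
      omega
    obtain ⟨i0, hi0⟩ := exists_chord hall k
    have hstep : x (finRotate (2 * m) k) = x k + (x (ep i0).1 + x (ep i0).2) := by
      rcases hi0 with hi0 | hi0
      · rw [← hi0]; exact (step_lemma H i0).1
      · rw [← hi0]; exact (step_lemma H i0).2
    have hkval : (k : ℕ) = n := rfl
    have hsum : ∑ i, (x (ep i).1 + x (ep i).2) * chi ep i (n + 1)
        = (∑ i, (x (ep i).1 + x (ep i).2) * chi ep i n) + (x (ep i0).1 + x (ep i0).2) :=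
      sum_step hlt hall (fun i => x (ep i).1 + x (ep i).2) i0 n
        (by rcases hi0 with hi0 | hi0 <;> [left; right] <;> rw [hi0])
    rw [hj, ← hrotk, hstep, ih k rfl, hkval, hsum]
    ring

end Aux3

lemma z2_1 : ∀ t SA SB ci : ZMod 2, SB + SA = ci → t + SB = t + (SA + ci) := by decide
lemma z2_1' : ∀ t SA SB ci : ZMod 2, SB + SA = ci → t + SA = t + (SB + ci) := by decide
lemma z2_3 : ∀ SA SB ci : ZMod 2, SB + SA = ci → SB = ci → SA = 0 := by decide
lemma z2_4 : ∀ t SA SB ci : ZMod 2, SB + SA = ci → (t + SA) + (t + SB) = ci := by decide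
lemma cancel4 : ∀ x0 SA SB u v w : ZMod 2,
    u = x0 + SA → v = x0 + SB → SB + SA = w + (u + v) → w = 0 := by decide

section Main

variable {m : ℕ} {ep : Fin m → Fin (2 * m) × Fin (2 * m)}

lemma sum_BA (hlt : ∀ i, (ep i).1 < (ep i).2)
    (hall : Function.Bijective
      (fun x : Fin m × Bool => if x.2 then (ep x.1).2 else (ep x.1).1))
    (c : Fin m → ZMod 2) (i : Fin m) :
    (∑ j, c j * chi ep j ((ep i).2 : ℕ)) + (∑ j, c j * chi ep j ((ep i).1 : ℕ))
      = (interMatrix ep).mulVec c i + c i := by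
  rw [← sum_key hlt hall c i, ← Finset.sum_add_distrib]
  exact Finset.sum_congr rfl fun j _ => (mul_add _ _ _).symm

lemma sum_BA0 (hlt : ∀ i, (ep i).1 < (ep i).2)
    (hall : Function.Bijective
      (fun x : Fin m × Bool => if x.2 then (ep x.1).2 else (ep x.1).1))
    {c : Fin m → ZMod 2} (hc : (interMatrix ep).mulVec c = 0) (i : Fin m) :
    (∑ j, c j * chi ep j ((ep i).2 : ℕ)) + (∑ j, c j * chi ep j ((ep i).1 : ℕ)) = c i := by
  have h := sum_BA hlt hall c i
  have h0 : (interMatrix ep).mulVec c i = 0 := by rw [hc]; rfl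
  rw [h0, zero_add] at h
  exact h

lemma toFun_mulVec (hm : 0 < m) (hlt : ∀ i, (ep i).1 < (ep i).2)
    (hall : Function.Bijective
      (fun x : Fin m × Bool => if x.2 then (ep x.1).2 else (ep x.1).1))
    {x : Fin (2 * m) → ZMod 2}
    (H : ∀ k, x (chordPairing m ep hall k) = x (finRotate (2 * m) k)) :
    (interMatrix ep).mulVec (fun i => x (ep i).1 + x (ep i).2) = 0 := by
  funext i
  set c : Fin m → ZMod 2 := fun i => x (ep i).1 + x (ep i).2 with hcdef
  have e1 : x (ep i).1 = x ⟨0, by omega⟩ + ∑ j, c j * chi ep j (((ep i).1 : Fin (2 * m)) : ℕ) :=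
    repr_lemma hm hlt H (ep i).1
  have e2 : x (ep i).2 = x ⟨0, by omega⟩ + ∑ j, c j * chi ep j (((ep i).2 : Fin (2 * m)) : ℕ) :=
    repr_lemma hm hlt H (ep i).2
  have e3 : (∑ j, c j * chi ep j ((ep i).2 : ℕ)) + (∑ j, c j * chi ep j ((ep i).1 : ℕ))
      = (interMatrix ep).mulVec c i + (x (ep i).1 + x (ep i).2) := sum_BA hlt hall c i
  show (interMatrix ep).mulVec c i = (0 : ZMod 2)
  exact cancel4 _ _ _ _ _ _ e1 e2 e3

lemma inv_H (hm : 0 < m) (hlt : ∀ i, (ep i).1 < (ep i).2)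
    (hall : Function.Bijective
      (fun x : Fin m × Bool => if x.2 then (ep x.1).2 else (ep x.1).1))
    {c : Fin m → ZMod 2} (hc : (interMatrix ep).mulVec c = 0) (t : ZMod 2) :
    ∀ k : Fin (2 * m),
      (t + ∑ i, c i * chi ep i ((chordPairing m ep hall k : Fin (2 * m)) : ℕ))
        = t + ∑ i, c i * chi ep i ((finRotate (2 * m) k : Fin (2 * m)) : ℕ) := by
  intro k
  obtain ⟨i, hi⟩ := exists_chord hall k
  rcases hi with hi | hi
  · -- k is the first endpoint of chord i
    have hτ : chordPairing m ep hall k = (ep i).2 := by rw [← hi, chordPairing_fst hall]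
    have hk : ((ep i).1 : ℕ) = (k : ℕ) := congrArg Fin.val hi
    have hlt1 : ((ep i).1 : ℕ) < ((ep i).2 : ℕ) := hlt i
    have hlt2 : ((ep i).2 : ℕ) < 2 * m := (ep i).2.isLt
    have hrval : ((finRotate (2 * m) k : Fin (2 * m)) : ℕ) = (k : ℕ) + 1 := by
      rw [finRotate_val, if_neg (by omega)]
    have hss : ∑ j, c j * chi ep j ((k : ℕ) + 1) = (∑ j, c j * chi ep j ((k : ℕ))) + c i :=
      sum_step hlt hall c i _ (Or.inl hk)
    rw [hτ, hrval, hss, ← hk]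
    exact z2_1 _ _ _ _ (sum_BA0 hlt hall hc i)
  · -- k is the second endpoint of chord i
    have hτ : chordPairing m ep hall k = (ep i).1 := by rw [← hi, chordPairing_snd hall]
    have hk : ((ep i).2 : ℕ) = (k : ℕ) := congrArg Fin.val hi
    have hlt1 : ((ep i).1 : ℕ) < ((ep i).2 : ℕ) := hlt i
    rcases Nat.lt_or_ge ((k : ℕ) + 1) (2 * m) with hcase | hcase
    · have hrval : ((finRotate (2 * m) k : Fin (2 * m)) : ℕ) = (k : ℕ) + 1 := by
        rw [finRotate_val, if_neg (by omega)]
      have hss : ∑ j, c j * chi ep j ((k : ℕ) + 1) = (∑ j, c j * chi ep j ((k : ℕ))) + c i :=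
        sum_step hlt hall c i _ (Or.inr hk)
      rw [hτ, hrval, hss, ← hk]
      exact z2_1' _ _ _ _ (sum_BA0 hlt hall hc i)
    · have hke : (k : ℕ) + 1 = 2 * m := by have := k.isLt; omega
      have hrval : ((finRotate (2 * m) k : Fin (2 * m)) : ℕ) = 0 := by
        rw [finRotate_val, if_pos hke]
      rw [hτ, hrval]
      have hSB : ∑ j, c j * chi ep j ((ep i).2 : ℕ) = c i := by
        rw [Finset.sum_eq_single i]
        · show c i * ((if ((ep i).1 : ℕ) < ((ep i).2 : ℕ) then (1 : ZMod 2) else 0)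
            + (if ((ep i).2 : ℕ) < ((ep i).2 : ℕ) then 1 else 0)) = c i
          rw [if_pos hlt1, if_neg (lt_irrefl _)]
          ring
        · intro j _ hj
          have d2 : ((ep j).2 : ℕ) ≠ ((ep i).2 : ℕ) := fun h => hj (b_inj hall (Fin.val_injective h))
          have d3 : ((ep j).1 : ℕ) ≠ ((ep i).2 : ℕ) := fun h => a_ne_b hall j i (Fin.val_injective h)
          have hj1 : ((ep j).1 : ℕ) < 2 * m := (ep j).1.isLt
          have hj2 : ((ep j).2 : ℕ) < 2 * m := (ep j).2.isLt
          show c j * ((if ((ep j).1 : ℕ) < ((ep i).2 : ℕ) then (1 : ZMod 2) else 0)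
            + (if ((ep j).2 : ℕ) < ((ep i).2 : ℕ) then 1 else 0)) = 0
          rw [if_pos (by omega), if_pos (by omega)]
          rw [show (1 : ZMod 2) + 1 = 0 from rfl, mul_zero]
        · simp
      have hSA : ∑ j, c j * chi ep j ((ep i).1 : ℕ) = 0 :=
        z2_3 _ _ _ (sum_BA0 hlt hall hc i) hSB
      rw [hSA]
      simp [chi]

lemma main_card (hm : 0 < m) (hlt : ∀ i, (ep i).1 < (ep i).2)
    (hall : Function.Bijective
      (fun x : Fin m × Bool => if x.2 then (ep x.1).2 else (ep x.1).1)) :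
    Nat.card {x : Fin (2 * m) → ZMod 2 //
        ∀ k, x (chordPairing m ep hall k) = x (finRotate (2 * m) k)}
      = 2 * Nat.card {c : Fin m → ZMod 2 // (interMatrix ep).mulVec c = 0} := by
  have e : {x : Fin (2 * m) → ZMod 2 //
        ∀ k, x (chordPairing m ep hall k) = x (finRotate (2 * m) k)}
      ≃ ZMod 2 × {c : Fin m → ZMod 2 // (interMatrix ep).mulVec c = 0} :=
    { toFun := fun x => (x.1 ⟨0, by omega⟩,
        ⟨fun i => x.1 (ep i).1 + x.1 (ep i).2, toFun_mulVec hm hlt hall x.2⟩)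
      invFun := fun p => ⟨fun j => p.1 + ∑ i, p.2.1 i * chi ep i (j : ℕ),
        fun k => inv_H hm hlt hall p.2.2 p.1 k⟩
      left_inv := fun x => Subtype.ext (funext fun j => (repr_lemma hm hlt x.2 j).symm)
      right_inv := fun p => by
        obtain ⟨t, c, hc⟩ := p
        refine Prod.ext ?_ (Subtype.ext (funext fun i => ?_))
        · show t + ∑ i, c i * chi ep i ((⟨0, by omega⟩ : Fin (2 * m)) : ℕ) = t
          simp [chi]
        · show (t + ∑ j, c j * chi ep j ((ep i).1 : ℕ))
            + (t + ∑ j, c j * chi ep j ((ep i).2 : ℕ)) = c i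
          exact z2_4 _ _ _ _ (sum_BA0 hlt hall hc i) }
  rw [Nat.card_congr e, Nat.card_prod, Nat.card_eq_fintype_card (α := ZMod 2), ZMod.card]

end Main

section Orbits

variable {α : Type*} [Fintype α] [DecidableEq α]

lemma fixed_of_closure (π : Equiv.Perm α) (x : α → ZMod 2) (hx : ∀ k, x (π k) = x k)
    (g : Equiv.Perm α) (hg : g ∈ Subgroup.closure ({π} : Set (Equiv.Perm α))) :
    ∀ a, x (g a) = x a := by
  rw [← Subgroup.zpowers_eq_closure] at hg
  obtain ⟨n, rfl⟩ := hg
  have hnat : ∀ (n : ℕ) (a : α), x ((π ^ n) a) = x a := by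
    intro n
    induction n with
    | zero => intro a; simp
    | succ n ih =>
      intro a
      rw [pow_succ]
      calc x ((π ^ n * π) a) = x ((π ^ n) (π a)) := rfl
        _ = x (π a) := ih (π a)
        _ = x a := hx a
  obtain ⟨n, rfl | rfl⟩ := Int.eq_nat_or_neg n
  · intro a
    show x ((π ^ (n : ℤ)) a) = x a
    rw [zpow_natCast]
    exact hnat n a
  · intro a
    show x ((π ^ (-(n : ℤ))) a) = x a
    rw [zpow_neg, zpow_natCast]
    have h := hnat n ((π ^ n)⁻¹ a)
    rw [Equiv.Perm.inv_def, Equiv.apply_symm_apply] at h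
    exact h.symm

lemma card_fixed (π : Equiv.Perm α) :
    Nat.card {x : α → ZMod 2 // ∀ k, x (π k) = x k} = 2 ^ permOrbits π := by
  set G := Subgroup.closure ({π} : Set (Equiv.Perm α))
  have e : {x : α → ZMod 2 // ∀ k, x (π k) = x k}
      ≃ (MulAction.orbitRel.Quotient G α → ZMod 2) :=
    { toFun := fun x => Quotient.lift x.1 (by
        rintro a b ⟨g, hg⟩
        rw [← hg]
        exact fixed_of_closure π x.1 x.2 g g.2 b)
      invFun := fun y => ⟨fun a => y ⟦a⟧,
        fun k => congrArg y (Quotient.sound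
          ⟨⟨π, Subgroup.mem_closure_singleton_self π⟩, rfl⟩)⟩
      left_inv := fun x => Subtype.ext (funext fun a => rfl)
      right_inv := fun y => funext fun q => Quotient.inductionOn q fun a => rfl }
  rw [Nat.card_congr e]
  have : Finite (MulAction.orbitRel.Quotient G α) := Quotient.finite _
  rw [Nat.card_fun, Nat.card_eq_fintype_card (α := ZMod 2), ZMod.card]
  rfl

end Orbits

/-- The genus of a quasi-tree `Q` of a connected ribbon graph equals half the
rank over GF(2) of the adjacency matrix of the intersection graph of the chord diagram `C`
formed by the chords corresponding to the edges of `Q` on the (single) boundary circle of a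
regular neighborhood of `Q`.

Model: the chord diagram `C` has `m` chords with endpoints `ep` on the circle `Fin (2m)`
(cyclic order given by the rotation `finRotate`); the regular neighborhood of `Q` is the
one-vertex ribbon graph `(σ₀, σ₁, σ₂) = (finRotate (2m), chordPairing, σ₁⁻¹σ₀⁻¹)` of this
chord diagram, whose genus is the genus `g(Q)` of the quasi-tree, given by the Euler
relation `2g = 1 + m - f` with `f` the number of faces.  Conclusion:
`2 g(Q) = rank_{GF(2)} (interMatrix)`. -/
theorem quasi_tree_genus_eq_half_intersection_rank (m : ℕ)
    (ep : Fin m → Fin (2 * m) × Fin (2 * m))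
    (hlt : ∀ i, (ep i).1 < (ep i).2)
    (hall : Function.Bijective
      (fun x : Fin m × Bool => if x.2 then (ep x.1).2 else (ep x.1).1))
    (g : ℕ)
    (hg : 2 * (g : ℤ) = 1 + m -
      permOrbits ((chordPairing m ep hall)⁻¹ * (finRotate (2 * m))⁻¹)) :
    2 * g = (interMatrix ep).rank := by
  rcases Nat.eq_zero_or_pos m with rfl | hm
  · haveI : IsEmpty (Fin (2 * 0)) := ⟨fun k => absurd k.isLt (by omega)⟩
    have hpe : permOrbits ((chordPairing 0 ep hall)⁻¹ * (finRotate (2 * 0))⁻¹) = 0 := by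
      rw [permOrbits]
      exact Nat.card_of_isEmpty
    rw [hpe] at hg
    exfalso
    push_cast at hg
    omega
  · set τ := chordPairing m ep hall with hτdef
    set r := finRotate (2 * m) with hrdef
    have hτ2 : ∀ k, τ (τ k) = k := by
      intro k
      obtain ⟨i, hi | hi⟩ := exists_chord hall k <;> rw [← hi]
      · rw [chordPairing_fst hall, chordPairing_snd hall]
      · rw [chordPairing_snd hall, chordPairing_fst hall]
    have hτinv : ∀ k, τ⁻¹ k = τ k := by
      intro k
      rw [Equiv.Perm.inv_def, Equiv.symm_apply_eq]
      exact (hτ2 k).symm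
    have hiff : ∀ x : Fin (2 * m) → ZMod 2,
        (∀ k, x ((τ⁻¹ * r⁻¹) k) = x k) ↔ (∀ k, x (τ k) = x (r k)) := by
      intro x
      constructor
      · intro h k
        have h2 := h (r k)
        rw [Equiv.Perm.mul_apply, Equiv.Perm.inv_def r, Equiv.symm_apply_apply, hτinv] at h2
        exact h2
      · intro h k
        have h2 := h (r⁻¹ k)
        rw [Equiv.Perm.inv_def r, Equiv.apply_symm_apply] at h2
        rw [Equiv.Perm.mul_apply, hτinv]
        exact h2
    have hcard1 := card_fixed (α := Fin (2 * m)) (τ⁻¹ * r⁻¹)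
    have e2 : {x : Fin (2 * m) → ZMod 2 // ∀ k, x ((τ⁻¹ * r⁻¹) k) = x k}
        ≃ {x : Fin (2 * m) → ZMod 2 // ∀ k, x (τ k) = x (r k)} :=
      Equiv.subtypeEquivRight hiff
    have hmc := main_card hm hlt hall
    have hker : Nat.card {c : Fin m → ZMod 2 // (interMatrix ep).mulVec c = 0}
        = 2 ^ (Module.finrank (ZMod 2) (LinearMap.ker (interMatrix ep).mulVecLin)) := by
      have ek : {c : Fin m → ZMod 2 // (interMatrix ep).mulVec c = 0}
          ≃ LinearMap.ker (interMatrix ep).mulVecLin :=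
        Equiv.subtypeEquivRight (fun c => by
          simp [LinearMap.mem_ker, Matrix.mulVecLin_apply])
      rw [Nat.card_congr ek]
      haveI : Fintype (LinearMap.ker (interMatrix ep).mulVecLin) := Fintype.ofFinite _
      rw [Nat.card_eq_fintype_card]
      have h := Module.card_eq_pow_finrank (K := ZMod 2)
        (V := LinearMap.ker (interMatrix ep).mulVecLin)
      rwa [ZMod.card] at h
    have hrank : (interMatrix ep).rank
        + Module.finrank (ZMod 2) (LinearMap.ker (interMatrix ep).mulVecLin) = m := by
      have h := LinearMap.finrank_range_add_finrank_ker (interMatrix ep).mulVecLin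
      rw [Module.finrank_fin_fun] at h
      exact h
    have hcomb : permOrbits (τ⁻¹ * r⁻¹)
        = 1 + Module.finrank (ZMod 2) (LinearMap.ker (interMatrix ep).mulVecLin) := by
      apply Nat.pow_right_injective (le_refl 2)
      show 2 ^ permOrbits (τ⁻¹ * r⁻¹)
        = 2 ^ (1 + Module.finrank (ZMod 2) (LinearMap.ker (interMatrix ep).mulVecLin))
      rw [← hcard1, Nat.card_congr e2, hmc, hker, pow_add, pow_one]
    have hg2 : 2 * (g : ℤ) = 1 + m -
        ((1 + Module.finrank (ZMod 2) (LinearMap.ker (interMatrix ep).mulVecLin) : ℕ) : ℤ) := by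
      rw [← hcomb]
      exact hg
    push_cast at hg2
    clear_value τ r
    clear hg hcard1 e2 hmc hker hcomb hiff hτinv hτ2 hτdef hrdef
    omega
end
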